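/- Let λ, μ, ν be weights with λ and μ dominant, and u, u′, q, q′, r Weyl group elements such that ν = q(−λ−uμ) = q′(−λ−u′μ). If r ∈ W_λ (the stabilizer of λ) and r′ ∈ W_{−w₀ν} satisfy r q′⁻¹ w₀⁻¹ r′ = q⁻¹ w₀⁻¹, then W_λ u W_μ = W_λ u′ W_μ as double cosets. -/

import Mathlib

/-- Let `W` be the Weyl group acting on the weight lattice, `λ, μ` dominant weights
(nonnegative against the positive coroots), `ν` a weight with
`ν = q(−λ−uμ) = q′(−λ−u′μ)`, and `w₀ ∈ W` the longest element.  If `r ∈ W_λ` and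
`r′ ∈ W_{−w₀ν}` satisfy `r q′⁻¹ w₀⁻¹ r′ = q⁻¹ w₀⁻¹`, then
`W_λ u W_μ = W_λ u′ W_μ` as double cosets. -/
theorem stmt_6 (W : Type*) (V : Type*) [Group W] [AddCommGroup V] [Module ℚ V]
    [DistribMulAction W V]
    (coroots : Finset (Module.Dual ℚ V))
    (lam mu nu : V)
    (hlam : ∀ c ∈ coroots, 0 ≤ c lam)
    (hmu : ∀ c ∈ coroots, 0 ≤ c mu)
    (u u' q q' r r' w0 : W)
    (hq : nu = q • (-lam - u • mu))
    (hq' : nu = q' • (-lam - u' • mu))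
    (hr : r ∈ MulAction.stabilizer W lam)
    (hr' : r' ∈ MulAction.stabilizer W (-(w0 • nu)))
    (heq : r * q'⁻¹ * w0⁻¹ * r' = q⁻¹ * w0⁻¹) :
    DoubleCoset.doubleCoset u (MulAction.stabilizer W lam : Set W)
        (MulAction.stabilizer W mu : Set W)
      = DoubleCoset.doubleCoset u' (MulAction.stabilizer W lam : Set W)
          (MulAction.stabilizer W mu : Set W) := by
  rw [MulAction.mem_stabilizer_iff] at hr hr'
  -- r' stabilizes w0 • nu
  have hr'' : r' • (w0 • nu) = w0 • nu := by
    have := hr'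
    rw [smul_neg, neg_eq_iff_eq_neg, neg_neg] at this
    exact this
  -- key group identity
  have hkey : q'⁻¹ * (w0⁻¹ * r' * w0) * q = r⁻¹ := by
    have : r * (q'⁻¹ * (w0⁻¹ * r' * w0) * q) = 1 := by
      have h1 : r * q'⁻¹ * w0⁻¹ * r' * w0 * q = q⁻¹ * w0⁻¹ * w0 * q := by
        rw [heq]
      group at h1 ⊢
      rw [h1]
    calc q'⁻¹ * (w0⁻¹ * r' * w0) * q
        = r⁻¹ * (r * (q'⁻¹ * (w0⁻¹ * r' * w0) * q)) := by group
      _ = r⁻¹ := by rw [this, mul_one]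
  -- action of both sides on (-lam - u • mu)
  have hact : (q'⁻¹ * (w0⁻¹ * r' * w0) * q) • (-lam - u • mu)
      = r⁻¹ • (-lam - u • mu) := by rw [hkey]
  have hl : (q'⁻¹ * (w0⁻¹ * r' * w0) * q) • (-lam - u • mu) = -lam - u' • mu := by
    rw [mul_smul, mul_smul, ← hq]
    have : (w0⁻¹ * r' * w0) • nu = nu := by
      rw [mul_smul, mul_smul, hr'', inv_smul_smul]
    rw [this, hq', inv_smul_smul]
  have hrlam : r⁻¹ • lam = lam := by
    rw [inv_smul_eq_iff, hr]
  have hmu' : u' • mu = r⁻¹ • (u • mu) := by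
    have := hact.symm.trans hl
    rw [smul_sub, smul_neg, hrlam] at this
    have := sub_right_injective this
    exact this.symm
  apply (DoubleCoset.doubleCoset_eq_of_mem ?_).symm
  refine DoubleCoset.mem_doubleCoset.mpr ⟨r⁻¹, ?_, u⁻¹ * r * u', ?_, by group⟩
  · rw [SetLike.mem_coe, MulAction.mem_stabilizer_iff, inv_smul_eq_iff, hr]
  · rw [SetLike.mem_coe, MulAction.mem_stabilizer_iff, mul_smul, mul_smul, hmu',
      smul_inv_smul, inv_smul_smul]
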